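/- There exists a constant C > 0 with the following property. Define F₁(t) = ∫₁^t exp(−ν(γ₁(t) − γ₁(s))) · 2π i k · f₁(s) ds for t ∈ [1,T], where f₁ : [1,T] → ℂ is continuous. Then sup_{t ∈ [1,T]} e^{a ν^{1/3} t} |F₁(t)| ≤ C |k|^{1/2} (k² + l²)^{−1/4} · (∫₁^T e^{2 a ν^{1/3} s} γ(s) |f₁(s)|² ds)^{1/2}, and ∫₁^T e^{2 a ν^{1/3} t} |F₁(t)|² dt ≤ C ν^{−1/3} |k| (k² + l²)^{−1/2} · ∫₁^T e^{2 a ν^{1/3} s} γ(s) |f₁(s)|² ds. The constant C is independent of ν, T, a, k, l, η, f₁. -/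

import Mathlib

set_option maxHeartbeats 1000000

open MeasureTheory intervalIntegral Real

private lemma cs_interval {u v : ℝ → ℝ} {a t : ℝ} (hat : a ≤ t)
    (hu : Continuous u) (hv : Continuous v) :
    (∫ s in a..t, u s * v s) ^ 2 ≤ (∫ s in a..t, u s ^ 2) * (∫ s in a..t, v s ^ 2) := by
  have hu2 : IntervalIntegrable (fun s => u s ^ 2) volume a t := (hu.pow 2).intervalIntegrable a t
  have hv2 : IntervalIntegrable (fun s => v s ^ 2) volume a t := (hv.pow 2).intervalIntegrable a t
  have huv : IntervalIntegrable (fun s => u s * v s) volume a t := (hu.mul hv).intervalIntegrable a t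
  have key : ∀ lam : ℝ, 0 ≤ (∫ s in a..t, u s ^ 2) * (lam * lam)
      + (2 * ∫ s in a..t, u s * v s) * lam + (∫ s in a..t, v s ^ 2) := by
    intro lam
    have h0 : 0 ≤ ∫ s in a..t, (lam * u s + v s) ^ 2 :=
      integral_nonneg hat fun x _ => sq_nonneg _
    have heq : (∫ s in a..t, (lam * u s + v s) ^ 2)
        = (∫ s in a..t, u s ^ 2) * (lam * lam)
          + (2 * ∫ s in a..t, u s * v s) * lam + (∫ s in a..t, v s ^ 2) := by
      have hfe : (fun s => (lam * u s + v s) ^ 2)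
          = fun s => (lam * lam) * u s ^ 2 + (2 * lam) * (u s * v s) + v s ^ 2 := by
        funext s; ring
      rw [hfe, integral_add ((hu2.const_mul _).add (huv.const_mul _)) hv2,
        integral_add (hu2.const_mul _) (huv.const_mul _),
        intervalIntegral.integral_const_mul, intervalIntegral.integral_const_mul]
      ring
    linarith
  have hd := discrim_le_zero key
  rw [discrim] at hd
  nlinarith [hd]

theorem stmt5 : ∃ C : ℝ, 0 < C ∧ ∀ (ν T a : ℝ) (k l : ℤ) (η : ℝ) (f₁ : ℝ → ℂ),
    0 < ν → ν < 1 → 1 < T → 0 ≤ a → a ≤ 4 → k ≠ 0 →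
    ContinuousOn f₁ (Set.Icc 1 T) →
    ∀ γ γ₁ : ℝ → ℝ,
    (∀ t, γ t = (2 * Real.pi) ^ 2 * ((k : ℝ) ^ 2 + (η - (k : ℝ) * t) ^ 2 + (l : ℝ) ^ 2)) →
    (∀ t, γ₁ t = ∫ s in (1:ℝ)..t, γ s) →
    ∀ F₁ : ℝ → ℂ,
    (∀ t, F₁ t = ∫ s in (1:ℝ)..t,
        (Real.exp (-(ν * (γ₁ t - γ₁ s))) : ℂ) *
          (2 * (Real.pi : ℂ) * Complex.I * (k : ℂ)) * f₁ s) →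
    (∀ t ∈ Set.Icc (1:ℝ) T,
        Real.exp (a * ν ^ ((1:ℝ)/3) * t) * ‖F₁ t‖ ≤
          C * |(k : ℝ)| ^ ((1:ℝ)/2) * ((k : ℝ) ^ 2 + (l : ℝ) ^ 2) ^ (-(1:ℝ)/4) *
            (∫ s in (1:ℝ)..T,
              Real.exp (2 * a * ν ^ ((1:ℝ)/3) * s) * γ s * ‖f₁ s‖ ^ 2) ^ ((1:ℝ)/2)) ∧
    (∫ t in (1:ℝ)..T, Real.exp (2 * a * ν ^ ((1:ℝ)/3) * t) * ‖F₁ t‖ ^ 2) ≤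
        C * ν ^ (-(1:ℝ)/3) * |(k : ℝ)| * ((k : ℝ) ^ 2 + (l : ℝ) ^ 2) ^ (-(1:ℝ)/2) *
          ∫ s in (1:ℝ)..T, Real.exp (2 * a * ν ^ ((1:ℝ)/3) * s) * γ s * ‖f₁ s‖ ^ 2 := by
  refine ⟨Real.exp 16, Real.exp_pos _, ?_⟩
  intro ν T a k l η f₁ hν hν1 hT ha0 ha4 hk hf₁ γ γ₁ hγ hγ₁ F₁ hF₁
  have hπ3 : (3:ℝ) < π := Real.pi_gt_three
  have hπ0 : (0:ℝ) < π := Real.pi_pos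
  have hπ4 : π ≤ 4 := Real.pi_le_four
  have hk1 : (1:ℝ) ≤ |(k:ℝ)| := by
    have := Int.one_le_abs hk
    calc (1:ℝ) ≤ ((|k| : ℤ) : ℝ) := by exact_mod_cast this
    _ = |(k:ℝ)| := by push_cast; ring
  have hkR : (k:ℝ) ≠ 0 := by
    intro h; apply hk; exact_mod_cast h
  have hk2 : (1:ℝ) ≤ (k:ℝ)^2 := by nlinarith [abs_nonneg (k:ℝ), sq_abs (k:ℝ)]
  have hkl0 : (0:ℝ) < (k:ℝ)^2 + (l:ℝ)^2 := by nlinarith [sq_nonneg (l:ℝ)]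
  set b := Real.sqrt ((k:ℝ)^2 + (l:ℝ)^2) with hbdef
  have hb0 : 0 < b := Real.sqrt_pos.2 hkl0
  have hb2 : b^2 = (k:ℝ)^2 + (l:ℝ)^2 := Real.sq_sqrt hkl0.le
  set c := ν ^ ((1:ℝ)/3) with hcdef
  have hc0 : 0 < c := Real.rpow_pos_of_pos hν _
  have hc3 : c^3 = ν := by
    rw [hcdef, ← Real.rpow_natCast (ν ^ ((1:ℝ)/3)) 3, ← Real.rpow_mul hν.le]
    norm_num
  -- Φ : antiderivative of γ
  set Φ : ℝ → ℝ := fun τ => (2*π)^2*((k:ℝ)^2+(l:ℝ)^2+η^2) * τ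
      - (2*π)^2*(η*(k:ℝ)) * τ^2 + (2*π)^2*((k:ℝ)^2/3) * τ^3 with hΦdef
  have hΦd : ∀ τ : ℝ, HasDerivAt Φ (γ τ) τ := by
    intro τ
    have h1 : HasDerivAt (fun τ:ℝ => τ) 1 τ := hasDerivAt_id τ
    have h2 : HasDerivAt (fun τ:ℝ => τ^2) (2*τ^1) τ := by simpa using hasDerivAt_pow 2 τ
    have h3 : HasDerivAt (fun τ:ℝ => τ^3) (3*τ^2) τ := by simpa using hasDerivAt_pow 3 τ
    have hd := ((h1.const_mul ((2*π)^2*((k:ℝ)^2+(l:ℝ)^2+η^2))).sub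
        (h2.const_mul ((2*π)^2*(η*(k:ℝ))))).add (h3.const_mul ((2*π)^2*((k:ℝ)^2/3)))
    refine hd.congr_deriv (Eq.symm ?_)
    rw [hγ τ]; ring
  have hγcont : Continuous γ := by
    have hγe : γ = fun t => (2 * π) ^ 2 * ((k : ℝ) ^ 2 + (η - (k : ℝ) * t) ^ 2 + (l : ℝ) ^ 2) :=
      funext hγ
    rw [hγe]; fun_prop
  have hγint : ∀ s t : ℝ, IntervalIntegrable γ volume s t := fun s t =>
    hγcont.intervalIntegrable s t
  have hγpos : ∀ s, 0 < γ s := by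
    intro s; rw [hγ s]; nlinarith [sq_nonneg (η - (k:ℝ)*s), sq_nonneg (l:ℝ)]
  have hγ₁Φ : ∀ t, γ₁ t = Φ t - Φ 1 := by
    intro t; rw [hγ₁ t]
    exact integral_eq_sub_of_hasDerivAt (fun x _ => hΦd x) (hγint 1 t)
  have hγ₁cont : Continuous γ₁ := by
    have : γ₁ = fun t => Φ t - Φ 1 := funext hγ₁Φ
    rw [this, hΦdef]; fun_prop
  have hgap : ∀ s t : ℝ, s ≤ t → 3*(t-s)^3 ≤ γ₁ t - γ₁ s := by
    intro s t hst
    rw [hγ₁Φ t, hγ₁Φ s]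
    have h1 : (0:ℝ) ≤ t - s := sub_nonneg.2 hst
    have h3 : (0:ℝ) ≤ (t-s)^3 := pow_nonneg h1 3
    have hbr : (1/12:ℝ)*(t-s)^3 ≤ (((k:ℝ)^2+(l:ℝ)^2+η^2) * t - (η*(k:ℝ)) * t^2 + ((k:ℝ)^2/3) * t^3)
        - (((k:ℝ)^2+(l:ℝ)^2+η^2) * s - (η*(k:ℝ)) * s^2 + ((k:ℝ)^2/3) * s^3) := by
      nlinarith [mul_nonneg h1 (sq_nonneg (η - (k:ℝ)*((t+s)/2))),
        mul_nonneg (sub_nonneg.2 hk2) h3, mul_nonneg h1 hkl0.le]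
    have hπsq : (36:ℝ) ≤ (2*π)^2 := by nlinarith
    have hB0 : (0:ℝ) ≤ (((k:ℝ)^2+(l:ℝ)^2+η^2) * t - (η*(k:ℝ)) * t^2 + ((k:ℝ)^2/3) * t^3)
        - (((k:ℝ)^2+(l:ℝ)^2+η^2) * s - (η*(k:ℝ)) * s^2 + ((k:ℝ)^2/3) * s^3) :=
      le_trans (by positivity) hbr
    have hmul : ((2*π)^2 - 36) * ((((k:ℝ)^2+(l:ℝ)^2+η^2) * t - (η*(k:ℝ)) * t^2 + ((k:ℝ)^2/3) * t^3)
        - (((k:ℝ)^2+(l:ℝ)^2+η^2) * s - (η*(k:ℝ)) * s^2 + ((k:ℝ)^2/3) * s^3)) ≥ 0 :=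
      mul_nonneg (by linarith) hB0
    simp only [hΦdef]
    nlinarith [hmul, hbr]
  -- elementary inequalities
  have hexpb : ∀ x : ℝ, 0 ≤ x → 4*x - 3*x^3 ≤ 4 - x^3 := by
    intro x hx; nlinarith [mul_nonneg hx (sq_nonneg (x-1)), sq_nonneg (2*x - 3/2)]
  have hcube : ∀ x : ℝ, 0 ≤ x → x - 1 ≤ x^3 := by
    intro x hx; nlinarith [mul_nonneg hx (sq_nonneg (x-1)), sq_nonneg (x - 1/2)]
  -- clamped forcing
  set f : ℝ → ℂ := fun s => f₁ (max 1 (min s T)) with hfdef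
  have hfcont : Continuous f := by
    apply hf₁.comp_continuous (by fun_prop)
    intro s
    exact ⟨le_max_left _ _, max_le hT.le (min_le_right _ _)⟩
  have hfeq : ∀ s ∈ Set.Icc (1:ℝ) T, f s = f₁ s := by
    intro s hs
    simp only [hfdef]
    rw [min_eq_left hs.2, max_eq_right hs.1]
  set g : ℝ → ℝ := fun s => Real.exp (a*c*s) * ‖f s‖ with hgdef
  have hgcont : Continuous g := by
    apply Continuous.mul _ hfcont.norm
    fun_prop
  have hgnn : ∀ s, 0 ≤ g s := fun s => mul_nonneg (Real.exp_nonneg _) (norm_nonneg _)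
  set p : ℝ → ℝ := fun s => γ s * g s ^ 2 with hpdef
  have hpcont : Continuous p := hγcont.mul (hgcont.pow 2)
  have hpnn : ∀ s, 0 ≤ p s := fun s => mul_nonneg (hγpos s).le (sq_nonneg _)
  have hDeq : (∫ s in (1:ℝ)..T, Real.exp (2*a*c*s) * γ s * ‖f₁ s‖^2) = ∫ s in (1:ℝ)..T, p s := by
    apply integral_congr
    intro s hs
    rw [Set.uIcc_of_le hT.le] at hs
    simp only [hpdef, hgdef]
    rw [← hfeq s hs, mul_pow, ← Real.exp_nat_mul]
    push_cast
    ring_nf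
  have hDnn : 0 ≤ ∫ s in (1:ℝ)..T, p s := integral_nonneg hT.le fun u _ => hpnn u
  -- the arctan bound
  set Ik := π / ((2*π)^2 * (|(k:ℝ)| * b)) with hIkdef
  have hIknn : 0 ≤ Ik := by positivity
  have harc : ∀ t : ℝ, (∫ s in (1:ℝ)..t, (γ s)⁻¹) ≤ Ik := by
    intro t
    set φ : ℝ → ℝ := fun s => ((k:ℝ)*b)⁻¹ * Real.arctan (((k:ℝ)*s - η)/b) with hφdef
    have hφd : ∀ s : ℝ, HasDerivAt φ ((b^2 + ((k:ℝ)*s - η)^2)⁻¹) s := by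
      intro s
      have hin : HasDerivAt (fun s:ℝ => ((k:ℝ)*s - η)/b) ((k:ℝ)*1/b) s :=
        (((hasDerivAt_id s).const_mul (k:ℝ)).sub_const η).div_const b
      have harct := (Real.hasDerivAt_arctan (((k:ℝ)*s - η)/b)).comp s hin
      have h2 := harct.const_mul ((k:ℝ)*b)⁻¹
      refine h2.congr_deriv (Eq.symm ?_)
      rw [mul_one]
      field_simp
    have hden : ∀ s : ℝ, (0:ℝ) < b^2 + ((k:ℝ)*s - η)^2 := by
      intro s; nlinarith [sq_nonneg ((k:ℝ)*s - η), hb0]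
    have hdencont : Continuous (fun s : ℝ => (b^2 + ((k:ℝ)*s - η)^2)⁻¹) := by
      apply Continuous.inv₀ (by fun_prop)
      intro s; exact (hden s).ne'
    have hγinv : ∀ s, (γ s)⁻¹ = ((2*π)^2)⁻¹ * (b^2 + ((k:ℝ)*s-η)^2)⁻¹ := by
      intro s
      rw [hγ s, hb2, ← mul_inv]
      congr 1
      ring
    have hstep : (∫ s in (1:ℝ)..t, (γ s)⁻¹)
        = ((2*π)^2)⁻¹ * (φ t - φ 1) := by
      rw [← integral_eq_sub_of_hasDerivAt (fun x _ => hφd x) (hdencont.intervalIntegrable 1 t),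
        ← intervalIntegral.integral_const_mul]
      exact integral_congr fun s _ => hγinv s
    have hφb : ∀ s : ℝ, |φ s| ≤ (|(k:ℝ)| * b)⁻¹ * (π/2) := by
      intro s
      rw [hφdef]
      simp only
      rw [abs_mul, abs_inv, abs_mul, abs_of_pos hb0]
      apply mul_le_mul_of_nonneg_left _ (by positivity)
      exact (abs_lt.2 ⟨Real.neg_pi_div_two_lt_arctan _, Real.arctan_lt_pi_div_two _⟩).le
    rw [hstep, hIkdef]
    have h1 := hφb t
    have h2 := hφb 1
    have habs : φ t - φ 1 ≤ (|(k:ℝ)| * b)⁻¹ * π := by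
      have h3 : |φ t - φ 1| ≤ |φ t| + |φ 1| := abs_sub _ _
      calc φ t - φ 1 ≤ |φ t - φ 1| := le_abs_self _
      _ ≤ (|(k:ℝ)| * b)⁻¹ * (π/2) + (|(k:ℝ)| * b)⁻¹ * (π/2) := by linarith
      _ = (|(k:ℝ)| * b)⁻¹ * π := by ring
    calc ((2*π)^2)⁻¹ * (φ t - φ 1) ≤ ((2*π)^2)⁻¹ * ((|(k:ℝ)| * b)⁻¹ * π) := by
          apply mul_le_mul_of_nonneg_left habs (by positivity)
    _ = π / ((2*π)^2 * (|(k:ℝ)| * b)) := by field_simp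
  -- kernel bound
  have hker : ∀ s t : ℝ, s ≤ t →
      Real.exp (a*c*t) * Real.exp (-(ν*(γ₁ t - γ₁ s)))
        ≤ Real.exp 4 * (Real.exp (-(ν*(t-s)^3)) * Real.exp (a*c*s)) := by
    intro s t hst
    rw [← Real.exp_add, ← Real.exp_add, ← Real.exp_add]
    apply Real.exp_le_exp.2
    set x := c*(t-s) with hxdef
    have hx : 0 ≤ x := mul_nonneg hc0.le (sub_nonneg.2 hst)
    have hx3 : x^3 = ν*(t-s)^3 := by rw [hxdef, mul_pow, hc3]
    have e2 : a*(c*(t-s)) ≤ 4*x := by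
      rw [hxdef]
      exact mul_le_mul_of_nonneg_right ha4 (mul_nonneg hc0.le (sub_nonneg.2 hst))
    have e3 : 3*x^3 ≤ ν*(γ₁ t - γ₁ s) := by
      calc 3*x^3 = ν*(3*(t-s)^3) := by rw [hx3]; ring
      _ ≤ ν*(γ₁ t - γ₁ s) := mul_le_mul_of_nonneg_left (hgap s t hst) hν.le
    have e4 := hexpb x hx
    nlinarith [e2, e3, e4, hx3]
  -- pointwise bound
  have hptw : ∀ t ∈ Set.Icc (1:ℝ) T,
      Real.exp (a*c*t) * ‖F₁ t‖ ≤ (2*π*|(k:ℝ)| * Real.exp 4) *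
        ∫ s in (1:ℝ)..t, Real.exp (-(ν*(t-s)^3)) * g s := by
    intro t ht
    obtain ⟨ht1, htT⟩ := ht
    have hF₁f : F₁ t = ∫ s in (1:ℝ)..t,
        (Real.exp (-(ν * (γ₁ t - γ₁ s))) : ℂ) * (2 * (π:ℂ) * Complex.I * (k:ℂ)) * f s := by
      rw [hF₁ t]
      apply integral_congr
      intro s hs
      rw [Set.uIcc_of_le ht1] at hs
      have hfs := hfeq s ⟨hs.1, hs.2.trans htT⟩
      simp only [hfs]
    have hic : Continuous (fun s => Real.exp (-(ν*(γ₁ t - γ₁ s))) * (2*π*|(k:ℝ)|) * ‖f s‖) := by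
      fun_prop
    have hnorm : ‖F₁ t‖ ≤ ∫ s in (1:ℝ)..t,
        Real.exp (-(ν*(γ₁ t - γ₁ s))) * (2*π*|(k:ℝ)|) * ‖f s‖ := by
      rw [hF₁f]
      refine (intervalIntegral.norm_integral_le_integral_norm ht1).trans_eq ?_
      apply integral_congr
      intro s _
      simp only [norm_mul, Complex.norm_real, Complex.norm_I, Real.norm_eq_abs,
        Real.abs_exp, Complex.norm_intCast, Complex.norm_ofNat, mul_one]
      rw [abs_of_pos hπ0]
    calc Real.exp (a*c*t) * ‖F₁ t‖
        ≤ Real.exp (a*c*t) * ∫ s in (1:ℝ)..t,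
            Real.exp (-(ν*(γ₁ t - γ₁ s))) * (2*π*|(k:ℝ)|) * ‖f s‖ :=
          mul_le_mul_of_nonneg_left hnorm (Real.exp_nonneg _)
    _ = ∫ s in (1:ℝ)..t, Real.exp (a*c*t) *
          (Real.exp (-(ν*(γ₁ t - γ₁ s))) * (2*π*|(k:ℝ)|) * ‖f s‖) := (intervalIntegral.integral_const_mul _ _).symm
    _ ≤ ∫ s in (1:ℝ)..t, (2*π*|(k:ℝ)| * Real.exp 4) * (Real.exp (-(ν*(t-s)^3)) * g s) := by
        apply integral_mono_on ht1 ((continuous_const.mul hic).intervalIntegrable 1 t)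
          ((continuous_const.mul
            (by fun_prop : Continuous (fun s => Real.exp (-(ν*(t-s)^3)) * g s))).intervalIntegrable 1 t)
        intro s hs
        have hkk := hker s t hs.2
        have hnn : (0:ℝ) ≤ 2*π*|(k:ℝ)| * ‖f s‖ := by positivity
        calc Real.exp (a*c*t) * (Real.exp (-(ν*(γ₁ t - γ₁ s))) * (2*π*|(k:ℝ)|) * ‖f s‖)
            = (Real.exp (a*c*t) * Real.exp (-(ν*(γ₁ t - γ₁ s)))) * (2*π*|(k:ℝ)| * ‖f s‖) := by
              ring
        _ ≤ (Real.exp 4 * (Real.exp (-(ν*(t-s)^3)) * Real.exp (a*c*s))) * (2*π*|(k:ℝ)| * ‖f s‖) :=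
              mul_le_mul_of_nonneg_right hkk hnn
        _ = (2*π*|(k:ℝ)| * Real.exp 4) * (Real.exp (-(ν*(t-s)^3)) * g s) := by
              simp only [hgdef]; ring
    _ = (2*π*|(k:ℝ)| * Real.exp 4) * ∫ s in (1:ℝ)..t, Real.exp (-(ν*(t-s)^3)) * g s :=
          integral_const_mul _ _
  -- Cauchy-Schwarz step
  have hCS : ∀ t : ℝ, 1 ≤ t →
      (∫ s in (1:ℝ)..t, Real.exp (-(ν*(t-s)^3)) * g s)^2
        ≤ Ik * ∫ s in (1:ℝ)..t, Real.exp (-(ν*(t-s)^3)) * p s := by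
    intro t ht1
    have hEcont : Continuous (fun s : ℝ => Real.exp (-(ν*(t-s)^3))) := by fun_prop
    have hucont : Continuous (fun s : ℝ => Real.sqrt (Real.exp (-(ν*(t-s)^3)) / γ s)) :=
      Real.continuous_sqrt.comp (hEcont.div hγcont fun s => (hγpos s).ne')
    have hvcont : Continuous
        (fun s : ℝ => Real.sqrt (Real.exp (-(ν*(t-s)^3)) * γ s) * g s) :=
      (Real.continuous_sqrt.comp (hEcont.mul hγcont)).mul hgcont
    have h := cs_interval ht1 hucont hvcont
    have huv : (∫ s in (1:ℝ)..t, Real.sqrt (Real.exp (-(ν*(t-s)^3)) / γ s) *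
        (Real.sqrt (Real.exp (-(ν*(t-s)^3)) * γ s) * g s))
        = ∫ s in (1:ℝ)..t, Real.exp (-(ν*(t-s)^3)) * g s := by
      apply integral_congr
      intro s _
      simp only
      have e1 : Real.sqrt (Real.exp (-(ν*(t-s)^3)) / γ s) *
          (Real.sqrt (Real.exp (-(ν*(t-s)^3)) * γ s) * g s)
          = (Real.sqrt (Real.exp (-(ν*(t-s)^3)) / γ s) *
            Real.sqrt (Real.exp (-(ν*(t-s)^3)) * γ s)) * g s := by ring
      rw [e1, ← Real.sqrt_mul (div_nonneg (Real.exp_nonneg _) (hγpos s).le)]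
      have e2 : Real.exp (-(ν*(t-s)^3)) / γ s * (Real.exp (-(ν*(t-s)^3)) * γ s)
          = Real.exp (-(ν*(t-s)^3)) ^ 2 := by
        field_simp [(hγpos s).ne']
      rw [e2, Real.sqrt_sq (Real.exp_nonneg _)]
    have hu2 : (∫ s in (1:ℝ)..t, Real.sqrt (Real.exp (-(ν*(t-s)^3)) / γ s) ^ 2)
        = ∫ s in (1:ℝ)..t, Real.exp (-(ν*(t-s)^3)) / γ s :=
      integral_congr fun s _ =>
        Real.sq_sqrt (div_nonneg (Real.exp_nonneg _) (hγpos s).le)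
    have hv2 : (∫ s in (1:ℝ)..t, (Real.sqrt (Real.exp (-(ν*(t-s)^3)) * γ s) * g s) ^ 2)
        = ∫ s in (1:ℝ)..t, Real.exp (-(ν*(t-s)^3)) * p s := by
      apply integral_congr
      intro s _
      simp only
      rw [mul_pow, Real.sq_sqrt (mul_nonneg (Real.exp_nonneg _) (hγpos s).le)]
      simp only [hpdef]
      ring
    rw [huv, hu2, hv2] at h
    refine h.trans ?_
    apply mul_le_mul_of_nonneg_right _ _
    · calc (∫ s in (1:ℝ)..t, Real.exp (-(ν*(t-s)^3)) / γ s)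
          ≤ ∫ s in (1:ℝ)..t, (γ s)⁻¹ := by
            apply integral_mono_on ht1
              ((hEcont.div hγcont fun s => (hγpos s).ne').intervalIntegrable 1 t)
              ((hγcont.inv₀ fun s => (hγpos s).ne').intervalIntegrable 1 t)
            intro s hs
            rw [div_eq_mul_inv]
            have hE1 : Real.exp (-(ν*(t-s)^3)) ≤ 1 := by
              rw [Real.exp_le_one_iff]
              have h30 : (0:ℝ) ≤ (t-s)^3 := pow_nonneg (sub_nonneg.2 hs.2) 3
              nlinarith [hν.le]
            calc Real.exp (-(ν*(t-s)^3)) * (γ s)⁻¹ ≤ 1 * (γ s)⁻¹ :=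
              mul_le_mul_of_nonneg_right hE1 (inv_nonneg.2 (hγpos s).le)
            _ = (γ s)⁻¹ := one_mul _
      _ ≤ Ik := harc t
    · exact integral_nonneg ht1 fun s _ => mul_nonneg (Real.exp_nonneg _) (hpnn s)
  set M := 2*π*|(k:ℝ)| * Real.exp 4 with hMdef
  have hM0 : 0 ≤ M := by positivity
  set D := ∫ s in (1:ℝ)..T, p s with hDdef
  have hED : ∀ t : ℝ, 1 ≤ t → t ≤ T →
      (∫ s in (1:ℝ)..t, Real.exp (-(ν*(t-s)^3)) * p s) ≤ D := by
    intro t ht1 htT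
    have hEcont : Continuous (fun s : ℝ => Real.exp (-(ν*(t-s)^3))) := by fun_prop
    calc (∫ s in (1:ℝ)..t, Real.exp (-(ν*(t-s)^3)) * p s)
        ≤ ∫ s in (1:ℝ)..t, p s := by
          apply integral_mono_on ht1 ((hEcont.mul hpcont).intervalIntegrable 1 t)
            (hpcont.intervalIntegrable 1 t)
          intro s hs
          have hE1 : Real.exp (-(ν*(t-s)^3)) ≤ 1 := by
            rw [Real.exp_le_one_iff]
            have h30 : (0:ℝ) ≤ (t-s)^3 := pow_nonneg (sub_nonneg.2 hs.2) 3
            nlinarith [hν.le]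
          calc Real.exp (-(ν*(t-s)^3)) * p s ≤ 1 * p s :=
            mul_le_mul_of_nonneg_right hE1 (hpnn s)
          _ = p s := one_mul _
    _ ≤ D := by
        rw [hDdef]
        exact integral_mono_interval le_rfl ht1 htT (ae_of_all _ fun s => hpnn s)
          (hpcont.intervalIntegrable 1 T)
  have hM2Ik : M^2 * Ik = π * Real.exp 4 ^ 2 * (|(k:ℝ)| * b⁻¹) := by
    rw [hMdef, hIkdef]
    have habs0 : |(k:ℝ)| ≠ 0 := abs_ne_zero.2 hkR
    field_simp
  constructor
  · intro t ht
    rw [hDeq]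
    have h14 : ((k:ℝ)^2 + (l:ℝ)^2) ^ (-(1:ℝ)/4) = (Real.sqrt b)⁻¹ := by
      rw [show (-(1:ℝ)/4) = -((1:ℝ)/4) by norm_num, Real.rpow_neg hkl0.le]
      congr 1
      rw [show ((1:ℝ)/4) = (1/2)*((1:ℝ)/2) by norm_num, Real.rpow_mul hkl0.le,
        ← Real.sqrt_eq_rpow, ← Real.sqrt_eq_rpow, ← hbdef]
    have hhalf : ∀ x : ℝ, x ^ ((1:ℝ)/2) = Real.sqrt x := fun x => (Real.sqrt_eq_rpow x).symm
    rw [h14, hhalf |(k:ℝ)|, hhalf D]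
    have hMIk : M * Real.sqrt Ik ≤ Real.exp 16 * Real.sqrt |(k:ℝ)| * (Real.sqrt b)⁻¹ := by
      apply (pow_le_pow_iff_left₀ (by positivity) (by positivity) (two_ne_zero)).1
      have hL : (M * Real.sqrt Ik)^2 = π * Real.exp 4 ^ 2 * (|(k:ℝ)| * b⁻¹) := by
        rw [mul_pow, Real.sq_sqrt hIknn, hM2Ik]
      have hR : (Real.exp 16 * Real.sqrt |(k:ℝ)| * (Real.sqrt b)⁻¹)^2
          = Real.exp 16 ^ 2 * (|(k:ℝ)| * b⁻¹) := by
        rw [mul_pow, mul_pow, Real.sq_sqrt (abs_nonneg _), inv_pow, Real.sq_sqrt hb0.le]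
        ring
      rw [hL, hR]
      have hpe : π * Real.exp 4 ^ 2 ≤ Real.exp 16 ^ 2 := by
        have h1 : Real.exp 4 ^ 2 = Real.exp 8 := by
          rw [← Real.exp_nat_mul]; norm_num
        have h2 : Real.exp 16 ^ 2 = Real.exp 32 := by
          rw [← Real.exp_nat_mul]; norm_num
        rw [h1, h2]
        have h3 : (4:ℝ) ≤ Real.exp 24 := by nlinarith [Real.add_one_le_exp (24:ℝ)]
        calc π * Real.exp 8 ≤ 4 * Real.exp 8 :=
              mul_le_mul_of_nonneg_right hπ4 (Real.exp_nonneg _)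
        _ ≤ Real.exp 24 * Real.exp 8 := mul_le_mul_of_nonneg_right h3 (Real.exp_nonneg _)
        _ = Real.exp 32 := by rw [← Real.exp_add]; norm_num
      exact mul_le_mul_of_nonneg_right hpe (by positivity)
    obtain ⟨ht1, htT⟩ := ht
    refine le_trans (hptw t ⟨ht1, htT⟩) ?_
    have h1 : (∫ s in (1:ℝ)..t, Real.exp (-(ν*(t-s)^3)) * g s)
        ≤ Real.sqrt Ik * Real.sqrt D := by
      have h4 : (∫ s in (1:ℝ)..t, Real.exp (-(ν*(t-s)^3)) * g s)^2 ≤ Ik * D :=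
        (hCS t ht1).trans (mul_le_mul_of_nonneg_left (hED t ht1 htT) hIknn)
      have h5 : 0 ≤ ∫ s in (1:ℝ)..t, Real.exp (-(ν*(t-s)^3)) * g s :=
        integral_nonneg ht1 fun s _ => mul_nonneg (Real.exp_nonneg _) (hgnn s)
      calc (∫ s in (1:ℝ)..t, Real.exp (-(ν*(t-s)^3)) * g s)
          = Real.sqrt ((∫ s in (1:ℝ)..t, Real.exp (-(ν*(t-s)^3)) * g s)^2) :=
            (Real.sqrt_sq h5).symm
      _ ≤ Real.sqrt (Ik * D) := Real.sqrt_le_sqrt h4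
      _ = Real.sqrt Ik * Real.sqrt D := Real.sqrt_mul hIknn _
    calc M * ∫ s in (1:ℝ)..t, Real.exp (-(ν*(t-s)^3)) * g s
        ≤ M * (Real.sqrt Ik * Real.sqrt D) := mul_le_mul_of_nonneg_left h1 hM0
    _ = (M * Real.sqrt Ik) * Real.sqrt D := by ring
    _ ≤ Real.exp 16 * Real.sqrt |(k:ℝ)| * (Real.sqrt b)⁻¹ * Real.sqrt D :=
        mul_le_mul_of_nonneg_right hMIk (Real.sqrt_nonneg _)
  · rw [hDeq]
    set Q : ℝ → ℝ := fun t => ∫ s in (1:ℝ)..t, Real.exp (c*s) * p s with hQdef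
    have hqcont : Continuous (fun s : ℝ => Real.exp (c*s) * p s) :=
      (by fun_prop : Continuous fun s : ℝ => Real.exp (c*s)).mul hpcont
    have hQd : ∀ t : ℝ, HasDerivAt Q (Real.exp (c*t) * p t) t := fun t =>
      integral_hasDerivAt_right (hqcont.intervalIntegrable 1 t)
        (hqcont.stronglyMeasurableAtFilter volume (nhds t)) hqcont.continuousAt
    have hQcont : Continuous Q := by
      rw [continuous_iff_continuousAt]
      exact fun t => (hQd t).continuousAt
    set R : ℝ → ℝ := fun t => Real.exp (-c*t) * Q t with hRdef
    have hRcont : Continuous R := by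
      rw [hRdef]
      exact (by fun_prop : Continuous fun t : ℝ => Real.exp (-c*t)).mul hQcont
    have hcRcont : Continuous (fun t : ℝ => c * R t) := continuous_const.mul hRcont
    have hRd : ∀ t : ℝ, HasDerivAt R (p t - c * R t) t := by
      intro t
      have h1 : HasDerivAt (fun t : ℝ => Real.exp (-c*t)) (-c * Real.exp (-c*t)) t := by
        have h0 := ((hasDerivAt_id t).const_mul (-c)).exp
        refine h0.congr_deriv (Eq.symm ?_)
        simp only [id_eq]
        ring
      have h2 := h1.mul (hQd t)
      have hee : Real.exp (-c*t) * Real.exp (c*t) = 1 := by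
        rw [← Real.exp_add]
        norm_num
      refine h2.congr_deriv (Eq.symm ?_)
      rw [hRdef]
      simp only
      linear_combination (-(p t)) * hee
    have hRnn : ∀ t : ℝ, 1 ≤ t → 0 ≤ R t := fun t ht =>
      mul_nonneg (Real.exp_nonneg _)
        (integral_nonneg ht fun s _ => mul_nonneg (Real.exp_nonneg _) (hpnn s))
    have hR1 : R 1 = 0 := by simp [hRdef, hQdef]
    have hRD : ∫ t in (1:ℝ)..T, R t ≤ c⁻¹ * D := by
      have hft : ∫ t in (1:ℝ)..T, (p t - c * R t) = R T - R 1 :=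
        integral_eq_sub_of_hasDerivAt (fun x _ => hRd x)
          ((hpcont.sub hcRcont).intervalIntegrable 1 T)
      rw [integral_sub (hpcont.intervalIntegrable 1 T)
        (hcRcont.intervalIntegrable 1 T), intervalIntegral.integral_const_mul, hR1, sub_zero] at hft
      have hRT := hRnn T (by linarith)
      have hcR : c * ∫ t in (1:ℝ)..T, R t ≤ D := by rw [hDdef]; linarith [hft, hRT]
      calc ∫ t in (1:ℝ)..T, R t = c⁻¹ * (c * ∫ t in (1:ℝ)..T, R t) := by
            field_simp
      _ ≤ c⁻¹ * D := mul_le_mul_of_nonneg_left hcR (inv_nonneg.2 hc0.le)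
    have hEptw : ∀ t ∈ Set.Icc (1:ℝ) T,
        (∫ s in (1:ℝ)..t, Real.exp (-(ν*(t-s)^3)) * p s) ≤ Real.exp 1 * R t := by
      intro t ht
      obtain ⟨ht1, htT⟩ := ht
      have hEcont : Continuous (fun s : ℝ => Real.exp (-(ν*(t-s)^3))) := by fun_prop
      calc (∫ s in (1:ℝ)..t, Real.exp (-(ν*(t-s)^3)) * p s)
          ≤ ∫ s in (1:ℝ)..t, (Real.exp 1 * Real.exp (-c*t)) * (Real.exp (c*s) * p s) := by
            apply integral_mono_on ht1 ((hEcont.mul hpcont).intervalIntegrable 1 t)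
              ((continuous_const.mul hqcont).intervalIntegrable 1 t)
            intro s hs
            have hx : 0 ≤ c*(t-s) := mul_nonneg hc0.le (sub_nonneg.2 hs.2)
            have h2 := hcube (c*(t-s)) hx
            have h3 : (c*(t-s))^3 = ν*(t-s)^3 := by rw [mul_pow, hc3]
            have h1 : -(ν*(t-s)^3) ≤ 1 + (-c*t) + c*s := by nlinarith [h2]
            calc Real.exp (-(ν*(t-s)^3)) * p s ≤ Real.exp (1 + (-c*t) + c*s) * p s :=
              mul_le_mul_of_nonneg_right (Real.exp_le_exp.2 h1) (hpnn s)
            _ = (Real.exp 1 * Real.exp (-c*t)) * (Real.exp (c*s) * p s) := by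
              rw [Real.exp_add, Real.exp_add]
              ring
      _ = Real.exp 1 * R t := by
            rw [intervalIntegral.integral_const_mul, hRdef]
            simp only
            rw [hQdef]
            ring
    set P : ℝ → ℂ := fun t => ∫ s in (1:ℝ)..t,
        (Real.exp (ν * γ₁ s) : ℂ) * ((2*(π:ℂ)*Complex.I*(k:ℂ)) * f s) with hPdef
    have hPintegrand : Continuous (fun s : ℝ =>
        (Real.exp (ν * γ₁ s) : ℂ) * ((2*(π:ℂ)*Complex.I*(k:ℂ)) * f s)) := by
      apply Continuous.mul _ (continuous_const.mul hfcont)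
      fun_prop
    have hPcont : Continuous P := by
      rw [continuous_iff_continuousAt]
      exact fun t => (integral_hasDerivAt_right (hPintegrand.intervalIntegrable 1 t)
        (hPintegrand.stronglyMeasurableAtFilter volume (nhds t))
        hPintegrand.continuousAt).continuousAt
    have hF₁P : ∀ t ∈ Set.Icc (1:ℝ) T, F₁ t = (Real.exp (-(ν * γ₁ t)) : ℂ) * P t := by
      intro t ht
      rw [hF₁ t, hPdef]
      simp only
      rw [← intervalIntegral.integral_const_mul]
      apply integral_congr
      intro s hs
      rw [Set.uIcc_of_le ht.1] at hs
      have hfs := hfeq s ⟨hs.1, hs.2.trans ht.2⟩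
      simp only [← hfs]
      rw [show -(ν * (γ₁ t - γ₁ s)) = -(ν * γ₁ t) + ν * γ₁ s by ring, Real.exp_add]
      push_cast
      ring
    have hLHS : (∫ t in (1:ℝ)..T, Real.exp (2*a*c*t) * ‖F₁ t‖^2)
        = ∫ t in (1:ℝ)..T, Real.exp (2*a*c*t) * ‖(Real.exp (-(ν * γ₁ t)) : ℂ) * P t‖^2 := by
      apply integral_congr
      intro t ht
      rw [Set.uIcc_of_le hT.le] at ht
      simp only [hF₁P t ht]
    rw [hLHS]
    have hmono : (∫ t in (1:ℝ)..T, Real.exp (2*a*c*t) * ‖(Real.exp (-(ν*γ₁ t)):ℂ) * P t‖^2)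
        ≤ ∫ t in (1:ℝ)..T, (M^2 * Ik * Real.exp 1) * R t := by
      apply integral_mono_on hT.le
        (((by fun_prop : Continuous fun t : ℝ => Real.exp (2*a*c*t)).mul
          ((((by fun_prop : Continuous fun t : ℝ => ((Real.exp (-(ν*γ₁ t)) : ℝ) : ℂ)).mul
            hPcont).norm).pow 2)).intervalIntegrable 1 T)
        ((continuous_const.mul hRcont).intervalIntegrable 1 T)
      intro t ht
      show Real.exp (2*a*c*t) * ‖(Real.exp (-(ν*γ₁ t)):ℂ) * P t‖^2 ≤ (M^2 * Ik * Real.exp 1) * R t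
      rw [← hF₁P t ht]
      have h1 := hptw t ht
      have h2 := hCS t ht.1
      have h3 := hEptw t ht
      have e1 : Real.exp (2*a*c*t) * ‖F₁ t‖^2 = (Real.exp (a*c*t) * ‖F₁ t‖)^2 := by
        rw [mul_pow, ← Real.exp_nat_mul]
        push_cast
        ring_nf
      rw [e1]
      calc (Real.exp (a*c*t) * ‖F₁ t‖)^2
          ≤ (M * ∫ s in (1:ℝ)..t, Real.exp (-(ν*(t-s)^3)) * g s)^2 := by
            apply pow_le_pow_left₀ (by positivity) h1
      _ = M^2 * (∫ s in (1:ℝ)..t, Real.exp (-(ν*(t-s)^3)) * g s)^2 := by rw [mul_pow]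
      _ ≤ M^2 * (Ik * ∫ s in (1:ℝ)..t, Real.exp (-(ν*(t-s)^3)) * p s) :=
            mul_le_mul_of_nonneg_left h2 (by positivity)
      _ ≤ M^2 * (Ik * (Real.exp 1 * R t)) :=
            mul_le_mul_of_nonneg_left (mul_le_mul_of_nonneg_left h3 hIknn) (by positivity)
      _ = (M^2 * Ik * Real.exp 1) * R t := by ring
    refine hmono.trans ?_
    rw [intervalIntegral.integral_const_mul]
    have hν13 : ν ^ (-(1:ℝ)/3) = c⁻¹ := by
      rw [show (-(1:ℝ)/3) = -((1:ℝ)/3) by norm_num, Real.rpow_neg hν.le, hcdef]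
    have hKhalf : ((k:ℝ)^2 + (l:ℝ)^2) ^ (-(1:ℝ)/2) = b⁻¹ := by
      rw [show (-(1:ℝ)/2) = -((1:ℝ)/2) by norm_num, Real.rpow_neg hkl0.le,
        ← Real.sqrt_eq_rpow, ← hbdef]
    rw [hν13, hKhalf]
    have hconst : M^2 * Ik * Real.exp 1 ≤ Real.exp 16 * (|(k:ℝ)| * b⁻¹) := by
      rw [hM2Ik]
      have h9 : Real.exp 4 ^ 2 * Real.exp 1 = Real.exp 9 := by
        rw [← Real.exp_nat_mul, ← Real.exp_add]
        norm_num
      have h7 : (4:ℝ) ≤ Real.exp 7 := by nlinarith [Real.add_one_le_exp (7:ℝ)]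
      have hpe : π * Real.exp 9 ≤ Real.exp 16 := by
        calc π * Real.exp 9 ≤ 4 * Real.exp 9 :=
              mul_le_mul_of_nonneg_right hπ4 (Real.exp_nonneg _)
        _ ≤ Real.exp 7 * Real.exp 9 := mul_le_mul_of_nonneg_right h7 (Real.exp_nonneg _)
        _ = Real.exp 16 := by rw [← Real.exp_add]; norm_num
      calc π * Real.exp 4 ^ 2 * (|(k:ℝ)| * b⁻¹) * Real.exp 1
          = (π * Real.exp 9) * (|(k:ℝ)| * b⁻¹) := by rw [← h9]; ring
      _ ≤ Real.exp 16 * (|(k:ℝ)| * b⁻¹) :=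
            mul_le_mul_of_nonneg_right hpe (by positivity)
    have hRint0 : 0 ≤ ∫ t in (1:ℝ)..T, R t :=
      integral_nonneg hT.le fun t ht => hRnn t ht.1
    have hstep : (M^2 * Ik * Real.exp 1) * ∫ t in (1:ℝ)..T, R t
        ≤ (Real.exp 16 * (|(k:ℝ)| * b⁻¹)) * (c⁻¹ * D) :=
      mul_le_mul hconst hRD hRint0
        (mul_nonneg (Real.exp_nonneg _) (mul_nonneg (abs_nonneg _) (inv_nonneg.2 hb0.le)))
    refine le_trans hstep (le_of_eq (by ring))
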